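/- For every integer n ≥ 2, every perfect matching M of the n-dimensional hypercube graph Q_n, and every forcing set S of M (i.e., every subset S of the edge set of M such that M is the only perfect matching of Q_n whose edge set contains S), the set S has cardinality at least 2^(n-2). In particular, the forcing number of every perfect matching of Q_n is at least 2^(n-2). -/

import Mathlib

/-- The `n`-dimensional hypercube graph: vertices are elements of `{0,1}^n`,
adjacent iff they differ in exactly one coordinate. -/
def hypercube (n : ℕ) : SimpleGraph (Fin n → ZMod 2) where
  Adj x y := ∃! i, x i ≠ y i
  symm := by constructor; rintro x y ⟨i, hi, hu⟩; exact ⟨i, Ne.symm hi, fun j hj => hu j (Ne.symm hj)⟩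
  loopless := by constructor; rintro x ⟨i, hi, -⟩; exact hi rfl

namespace DiwanAux

lemma z2_add_one_add_one (a : ZMod 2) : a + 1 + 1 = a := by revert a; decide

lemma z2_ne_iff {a b : ZMod 2} : a ≠ b ↔ b = a + 1 := by revert a b; decide

lemma z2_self_ne_add_one (a : ZMod 2) : a ≠ a + 1 := by revert a; decide

lemma z2_ne_add_one_self (a : ZMod 2) : a + 1 ≠ a := by revert a; decide

abbrev Vt (n : ℕ) := Fin n → ZMod 2

def sgl {n : ℕ} (i : Fin n) : Vt n := Pi.single i 1

lemma sgl_apply {n : ℕ} (i j : Fin n) : sgl i j = if j = i then 1 else 0 := by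
  simp [sgl, Pi.single_apply]

lemma add_sgl_add_sgl {n : ℕ} (x : Vt n) (i : Fin n) : x + sgl i + sgl i = x := by
  funext j
  simp only [Pi.add_apply, sgl_apply]
  split_ifs
  · exact z2_add_one_add_one _
  · simp

lemma eq_add_sgl_add_sgl_iff {n : ℕ} (u : Vt n) (i j : Fin n) :
    u = u + sgl i + sgl j ↔ j = i := by
  constructor
  · intro h
    by_contra hji
    have := congrFun h i
    simp only [Pi.add_apply, sgl_apply, if_pos rfl, if_neg (Ne.symm hji), add_zero] at this
    exact z2_self_ne_add_one _ this
  · rintro rfl; rw [add_sgl_add_sgl]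

lemma hyp_adj {n : ℕ} {x y : Vt n} :
    (hypercube n).Adj x y ↔ ∃ i, y = x + sgl i := by
  constructor
  · rintro ⟨i, hi, hu⟩
    refine ⟨i, funext fun j => ?_⟩
    simp only [Pi.add_apply, sgl_apply]
    by_cases hj : j = i
    · subst hj
      rw [if_pos rfl]
      exact z2_ne_iff.mp hi
    · rw [if_neg hj, add_zero]
      by_contra hne
      exact hj (hu j (fun h => hne h.symm))
  · rintro ⟨i, rfl⟩
    refine ⟨i, ?_, fun j hj => ?_⟩
    · simp only [Pi.add_apply, sgl_apply, if_pos rfl]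
      exact z2_self_ne_add_one _
    · by_contra hji
      simp only [Pi.add_apply, sgl_apply, if_neg hji, add_zero, ne_eq, not_true_eq_false] at hj


open Finset

variable {n : ℕ} {K : Type} [Field K] [CharP K 2]

noncomputable def Amat (α : Fin n → K) : Matrix (Vt n) (Vt n) K :=
  fun u v => ∑ i, if v = u + sgl i then α i else 0

lemma Amat_symm (α : Fin n → K) (u v : Vt n) : Amat α u v = Amat α v u := by
  unfold Amat
  refine Finset.sum_congr rfl fun i _ => ?_
  congr 1
  simp only [eq_iff_iff]
  constructor
  · rintro rfl; rw [add_sgl_add_sgl]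
  · rintro rfl; rw [add_sgl_add_sgl]

lemma Amat_diag (α : Fin n → K) (u : Vt n) : Amat α u u = 0 := by
  unfold Amat
  refine Finset.sum_eq_zero fun i _ => ?_
  rw [if_neg]
  intro h
  have := congrFun h i
  simp only [Pi.add_apply, sgl_apply, if_pos rfl] at this
  exact z2_self_ne_add_one _ this

lemma Amat_ne_zero {α : Fin n → K} {u w : Vt n} (h : Amat α w u ≠ 0) :
    ∃ i, w = u + sgl i := by
  unfold Amat at h
  obtain ⟨i, -, hi⟩ := Finset.exists_ne_zero_of_sum_ne_zero h
  rw [ne_eq, ite_eq_right_iff, not_forall] at hi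
  obtain ⟨hc, -⟩ := hi
  exact ⟨i, by rw [hc, add_sgl_add_sgl]⟩

lemma Amat_pair (α : Fin n → K) {u w : Vt n} {i : Fin n} (h : w = u + sgl i) :
    Amat α w u = α i := by
  unfold Amat
  rw [Finset.sum_eq_single_of_mem i (Finset.mem_univ i)]
  · rw [if_pos (by rw [h, add_sgl_add_sgl])]
  · intro j _ hj
    rw [if_neg]
    intro hc
    rw [h] at hc
    exact hj ((eq_add_sgl_add_sgl_iff u i j).mp hc)

lemma Amat_mul_self (α : Fin n → K) (hsum : ∑ i, α i = 0) :
    Amat α * Amat α = 0 := by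
  ext u w
  rw [Matrix.mul_apply, Matrix.zero_apply]
  have step1 : ∀ v : Vt n, Amat α u v * Amat α v w
      = ∑ i, if v = u + sgl i then α i * Amat α v w else 0 := by
    intro v
    rw [show Amat α u v = ∑ i, if v = u + sgl i then α i else 0 from rfl, Finset.sum_mul]
    refine Finset.sum_congr rfl fun i _ => ?_
    rw [ite_mul, zero_mul]
  calc ∑ v, Amat α u v * Amat α v w
      = ∑ v, ∑ i, if v = u + sgl i then α i * Amat α v w else 0 := by
        exact Finset.sum_congr rfl fun v _ => step1 v
    _ = ∑ i, ∑ v, if v = u + sgl i then α i * Amat α v w else 0 := Finset.sum_comm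
    _ = ∑ i, α i * Amat α (u + sgl i) w := by
        refine Finset.sum_congr rfl fun i _ => ?_
        rw [Finset.sum_ite_eq' Finset.univ (u + sgl i) (fun v => α i * Amat α v w),
          if_pos (Finset.mem_univ _)]
    _ = ∑ i, ∑ j, if w = u + sgl i + sgl j then α i * α j else 0 := by
        refine Finset.sum_congr rfl fun i _ => ?_
        rw [show Amat α (u + sgl i) w = ∑ j, if w = (u + sgl i) + sgl j then α j else 0 from rfl,
          Finset.mul_sum]
        exact Finset.sum_congr rfl fun j _ => by rw [mul_ite, mul_zero]
    _ = 0 := by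
        by_cases huw : w = u
        · subst huw
          have : ∀ i : Fin n, (∑ j, if w = w + sgl i + sgl j then α i * α j else 0) = α i * α i := by
            intro i
            simp only [eq_add_sgl_add_sgl_iff]
            rw [Finset.sum_ite_eq' Finset.univ i (fun j => α i * α j), if_pos (Finset.mem_univ _)]
          rw [Finset.sum_congr rfl fun i _ => this i, ← CharTwo.sum_mul_self, hsum, mul_zero]
        · rw [← Finset.sum_product']
          refine Finset.sum_involution (fun p _ => (p.2, p.1)) ?_ ?_ (fun p hp => Finset.mem_univ _) ?_
          · rintro ⟨i, j⟩ -
            simp only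
            have hcomm : u + sgl i + sgl j = u + sgl j + sgl i := by
              rw [add_assoc, add_assoc, add_comm (sgl i)]
            by_cases hc : w = u + sgl i + sgl j
            · rw [if_pos hc, if_pos (by rw [← hcomm]; exact hc), mul_comm, CharTwo.add_self_eq_zero]
            · rw [if_neg hc, if_neg (by rw [← hcomm]; exact hc), add_zero]
          · rintro ⟨i, j⟩ - hne
            intro heq
            have hij : j = i := congrArg Prod.fst heq
            subst hij
            rw [if_neg (fun hc => huw (by rw [hc, add_sgl_add_sgl]))] at hne
            exact hne rfl
          · rintro ⟨i, j⟩ -; rfl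


lemma det_submatrix_ne_zero {n : ℕ} {K : Type} [Field K] [CharP K 2]
    (α : Fin n → K) (hα : ∀ i, α i ≠ 0)
    (W : Set (Vt n)) [Fintype W]
    (m : Vt n → Vt n)
    (hmW : ∀ v, v ∈ W → m v ∈ W)
    (hmadj : ∀ v, ∃ i, m v = v + sgl i)
    (hminv : ∀ v, m (m v) = v)
    (huniq : ∀ σ : Vt n → Vt n,
      (∀ v ∈ W, σ v ∈ W) → (∀ v ∉ W, σ v = m v) →
      (∀ v ∈ W, σ (σ v) = v) → (∀ v ∈ W, ∃ i, σ v = v + sgl i) →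
      ∀ v ∈ W, σ v = m v) :
    ((Amat α).submatrix (Subtype.val : W → Vt n) Subtype.val).det ≠ 0 := by
  classical
  set B := (Amat α).submatrix (Subtype.val : W → Vt n) Subtype.val with hB
  have hBsymm : ∀ x y : W, B x y = B y x := fun x y => Amat_symm α _ _
  set σ₀ : Equiv.Perm ↥W :=
    ⟨fun u => ⟨m u, hmW _ u.2⟩, fun u => ⟨m u, hmW _ u.2⟩,
      fun u => Subtype.ext (hminv u), fun u => Subtype.ext (hminv u)⟩ with hσ₀
  have hσ₀inv : σ₀⁻¹ = σ₀ := rfl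
  have hsmul : ∀ (s : ℤˣ) (x : K), s • x = x := by
    intro s x
    rcases Int.units_eq_one_or s with h | h <;> subst h
    · rw [one_smul]
    · rw [Units.smul_def, Units.val_neg, Units.val_one, neg_smul, one_smul, CharTwo.neg_eq]
  have key : ∀ σ : Equiv.Perm ↥W, σ⁻¹ = σ → (∏ u, B (σ u) u) ≠ 0 → σ = σ₀ := by
    intro σ hinv hne
    have hσσ : ∀ x, σ (σ x) = x := by
      intro x
      nth_rewrite 1 [← hinv]
      exact Equiv.symm_apply_apply σ x
    rw [Finset.prod_ne_zero_iff] at hne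
    have hedge : ∀ u : W, ∃ i, ((σ u : Vt n)) = (u : Vt n) + sgl i :=
      fun u => Amat_ne_zero (hne u (Finset.mem_univ u))
    set σh : Vt n → Vt n := fun v => if h : v ∈ W then (σ ⟨v, h⟩ : Vt n) else m v with hσh
    have hres : ∀ v, (hv : v ∈ W) → σh v = (σ ⟨v, hv⟩ : Vt n) := by
      intro v hv; rw [hσh]; exact dif_pos hv
    have hfinal : ∀ v ∈ W, σh v = m v := by
      refine huniq σh ?_ ?_ ?_ ?_
      · intro v hv; rw [hres v hv]; exact (σ ⟨v, hv⟩).2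
      · intro v hv; rw [hσh]; exact dif_neg hv
      · intro v hv
        rw [hres v hv, hres _ (σ ⟨v, hv⟩).2]
        have : (⟨(σ ⟨v, hv⟩ : Vt n), (σ ⟨v, hv⟩).2⟩ : W) = σ ⟨v, hv⟩ := Subtype.ext rfl
        rw [this, hσσ]
      · intro v hv; rw [hres v hv]; exact hedge ⟨v, hv⟩
    refine Equiv.ext fun u => Subtype.ext ?_
    have := hfinal u u.2
    rw [hres _ u.2] at this
    exact this
  have hdet : B.det = ∑ σ : Equiv.Perm ↥W, ∏ u, B (σ u) u := by
    rw [Matrix.det_apply]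
    exact Finset.sum_congr rfl fun σ _ => hsmul _ _
  have hsplit := Finset.sum_filter_add_sum_filter_not (Finset.univ : Finset (Equiv.Perm ↥W))
    (fun σ => σ⁻¹ = σ) (fun σ => ∏ u, B (σ u) u)
  have hnon : ∑ σ ∈ Finset.filter (fun σ : Equiv.Perm ↥W => ¬σ⁻¹ = σ) Finset.univ, (∏ u : ↥W, B (σ u) u) = 0 := by
    refine Finset.sum_involution (fun σ _ => σ⁻¹) ?_ ?_ ?_ ?_
    · intro σ hσ
      have hts : (∏ u, B (σ⁻¹ u) u) = ∏ u, B (σ u) u := by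
        calc (∏ u, B (σ⁻¹ u) u) = ∏ u, B (σ⁻¹ (σ u)) (σ u) := (Equiv.prod_comp σ _).symm
          _ = ∏ u, B u (σ u) := by
              exact Finset.prod_congr rfl fun u _ => by rw [show σ⁻¹ (σ u) = u from Equiv.symm_apply_apply σ u]
          _ = ∏ u, B (σ u) u := Finset.prod_congr rfl fun u _ => hBsymm _ _
      rw [hts, CharTwo.add_self_eq_zero]
    · intro σ hσ _
      exact (Finset.mem_filter.mp hσ).2
    · intro σ hσ
      rw [Finset.mem_filter] at hσ ⊢
      refine ⟨Finset.mem_univ _, fun h => hσ.2 ?_⟩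
      rw [inv_inv] at h
      exact h.symm
    · intro σ _
      exact inv_inv σ
  have hone : ∑ σ ∈ Finset.filter (fun σ : Equiv.Perm ↥W => σ⁻¹ = σ) Finset.univ, (∏ u : ↥W, B (σ u) u)
      = ∏ u : ↥W, B (σ₀ u) u := by
    refine Finset.sum_eq_single_of_mem σ₀ ?_ ?_
    · rw [Finset.mem_filter]; exact ⟨Finset.mem_univ _, hσ₀inv⟩
    · intro σ hσ hne
      by_contra h
      exact hne (key σ (Finset.mem_filter.mp hσ).2 h)
  have hval : (∏ u : W, B (σ₀ u) u) ≠ 0 := by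
    rw [Finset.prod_ne_zero_iff]
    intro u _
    obtain ⟨i, hi⟩ := hmadj (u : Vt n)
    have : B (σ₀ u) u = α i := Amat_pair α hi
    rw [this]
    exact hα i
  rw [hdet, ← hsplit, hnon, hone, add_zero]
  exact hval

lemma exists_omega : ∃ ω : GaloisField 2 2, ω ≠ 0 ∧ ω ≠ 1 := by
  classical
  by_contra h
  push_neg at h
  have hinj : Function.Injective (fun x : GaloisField 2 2 => if x = 0 then (0 : Fin 2) else 1) := by
    intro x y hxy
    simp only at hxy
    by_cases hx : x = 0 <;> by_cases hy : y = 0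
    · rw [hx, hy]
    · exfalso; rw [if_pos hx, if_neg hy] at hxy; exact absurd hxy (by decide)
    · exfalso; rw [if_neg hx, if_pos hy] at hxy; exact absurd hxy (by decide)
    · rw [h x hx, h y hy]
  have hle : Nat.card (GaloisField 2 2) ≤ Nat.card (Fin 2) :=
    Nat.card_le_card_of_injective _ hinj
  rw [GaloisField.card 2 2 (by norm_num), Nat.card_eq_fintype_card, Fintype.card_fin] at hle
  norm_num at hle

lemma exists_alpha (n : ℕ) (hn : 2 ≤ n) :
    ∃ α : Fin n → GaloisField 2 2, (∀ i, α i ≠ 0) ∧ ∑ i, α i = 0 := by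
  set K := GaloisField 2 2
  have h2 : (2 : K) = 0 := by
    have := CharTwo.add_self_eq_zero (1 : K)
    rwa [one_add_one_eq_two] at this
  rcases Nat.even_or_odd n with he | ho
  · refine ⟨fun _ => 1, fun i => one_ne_zero, ?_⟩
    rw [Finset.sum_const, Finset.card_univ, Fintype.card_fin, nsmul_eq_mul, mul_one]
    exact (CharP.cast_eq_zero_iff K 2 n).mpr he.two_dvd
  · obtain ⟨ω, hω0, hω1⟩ := exists_omega
    have hω10 : ω + 1 ≠ 0 := by
      intro h
      apply hω1
      calc ω = ω + 1 + 1 := by rw [add_assoc, CharTwo.add_self_eq_zero, add_zero]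
        _ = 1 := by rw [h, zero_add]
    set i0 : Fin n := ⟨0, by omega⟩
    set i1 : Fin n := ⟨1, by omega⟩
    have hne : i0 ≠ i1 := by simp [i0, i1, Fin.ext_iff]
    refine ⟨fun i => if i = i0 then ω else if i = i1 then ω + 1 else 1, fun i => ?_, ?_⟩
    · show (if i = i0 then ω else if i = i1 then ω + 1 else 1) ≠ 0
      by_cases h0 : i = i0
      · rw [if_pos h0]; exact hω0
      · rw [if_neg h0]
        by_cases h1 : i = i1
        · rw [if_pos h1]; exact hω10
        · rw [if_neg h1]; exact one_ne_zero
    · show (∑ i : Fin n, if i = i0 then ω else if i = i1 then ω + 1 else 1) = 0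
      have hform : ∀ i : Fin n, (if i = i0 then ω else if i = i1 then ω + 1 else 1)
          = 1 + ((if i = i0 then ω + 1 else 0) + (if i = i1 then ω else 0)) := by
        intro i
        by_cases h0 : i = i0
        · subst h0
          rw [if_pos rfl, if_pos rfl, if_neg hne, add_zero, add_comm 1 (ω + 1), add_assoc,
            CharTwo.add_self_eq_zero, add_zero]
        · rw [if_neg h0, if_neg h0, zero_add]
          by_cases h1 : i = i1
          · rw [if_pos h1, if_pos h1, add_comm]
          · rw [if_neg h1, if_neg h1, add_zero]
      rw [Finset.sum_congr rfl fun i _ => hform i, Finset.sum_add_distrib,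
        Finset.sum_add_distrib, Finset.sum_ite_eq' Finset.univ i0 (fun _ => ω + 1),
        Finset.sum_ite_eq' Finset.univ i1 (fun _ => ω), if_pos (Finset.mem_univ _),
        if_pos (Finset.mem_univ _), Finset.sum_const, Finset.card_univ, Fintype.card_fin,
        nsmul_eq_mul, mul_one]
      obtain ⟨k, hk⟩ := ho
      have hcast : (n : K) = 1 := by
        rw [hk]
        push_cast
        rw [(CharP.cast_eq_zero_iff K 2 (2 * k)).mpr (dvd_mul_right 2 k), zero_add]
      rw [hcast]
      have : ω + 1 + ω = 1 := by
        rw [add_right_comm, CharTwo.add_self_eq_zero, zero_add]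
      rw [this, one_add_one_eq_two, h2]

end DiwanAux

open Module in
lemma two_mul_card_le_of_sq_zero {K : Type} [Field K] {m : Type} [Fintype m] [DecidableEq m]
    (A : Matrix m m K) (hA : A * A = 0) (W : Set m) [Fintype W]
    (hdet : (A.submatrix (Subtype.val : W → m) Subtype.val).det ≠ 0) :
    2 * Fintype.card W ≤ Fintype.card m := by
  classical
  set L := A.mulVecLin with hL
  have hrk : LinearMap.range L ≤ LinearMap.ker L := by
    rintro x ⟨y, rfl⟩
    have : L ∘ₗ L = 0 := by rw [hL, ← Matrix.mulVecLin_mul, hA, Matrix.mulVecLin_zero]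
    exact congrFun (congrArg (fun (f : (m → K) →ₗ[K] (m → K)) => f.toFun) this) y
  set B := A.submatrix (Subtype.val : W → m) Subtype.val with hB
  haveI : Invertible B := B.invertibleOfIsUnitDet (isUnit_iff_ne_zero.mpr hdet)
  set F : W → (m → K) := fun w => fun u => A u w with hF
  have hFind : LinearIndependent K F := by
    rw [Fintype.linearIndependent_iff]
    intro c hc
    have hBc : B.mulVec c = 0 := by
      funext u
      have h1 := congrFun hc (u : m)
      simp only [Finset.sum_apply, Pi.smul_apply, Pi.zero_apply, hF, smul_eq_mul] at h1
      simp only [hB, Matrix.mulVec, dotProduct, Matrix.submatrix_apply, Pi.zero_apply]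
      rw [← h1]
      exact Finset.sum_congr rfl fun w _ => mul_comm _ _
    have hc0 : c = 0 := B.mulVec_injective_of_invertible (a₁ := c) (a₂ := 0)
      (by rw [hBc, Matrix.mulVec_zero])
    exact fun w => congrFun hc0 w
  have hFmem : ∀ w : W, F w ∈ LinearMap.range L := by
    intro w
    refine ⟨Pi.single (w : m) 1, ?_⟩
    show A.mulVec (Pi.single (w : m) 1) = F w
    rw [Matrix.mulVec_single]
    funext u; simp [hF]
  set F' : W → LinearMap.range L := fun w => ⟨F w, hFmem w⟩ with hF'
  have hF'ind : LinearIndependent K F' :=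
    LinearIndependent.of_comp (LinearMap.range L).subtype (by exact hFind)
  have h1 : Fintype.card W ≤ finrank K (LinearMap.range L) :=
    hF'ind.fintype_card_le_finrank
  have h2 : finrank K (LinearMap.range L) ≤ finrank K (LinearMap.ker L) :=
    Submodule.finrank_mono hrk
  have h3 : finrank K (LinearMap.range L) + finrank K (LinearMap.ker L) = Fintype.card m := by
    rw [LinearMap.finrank_range_add_finrank_ker, Module.finrank_fintype_fun_eq_card]
  omega

open DiwanAux

/-- Every forcing set of every perfect matching of `Q_n` has cardinality at least
`2^(n-2)`, for all `n ≥ 2`. -/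
theorem forcing_number_hypercube (n : ℕ) (hn : 2 ≤ n)
    (M : (hypercube n).Subgraph) (hM : M.IsPerfectMatching)
    (S : Set (Sym2 (Fin n → ZMod 2))) (hS : S ⊆ M.edgeSet)
    (hforce : ∀ M' : (hypercube n).Subgraph,
      M'.IsPerfectMatching → S ⊆ M'.edgeSet → M' = M) :
    2 ^ (n - 2) ≤ S.ncard := by
  classical
  have hpm : ∀ v, ∃! w, M.Adj v w := SimpleGraph.Subgraph.isPerfectMatching_iff.mp hM
  set m : (Fin n → ZMod 2) → (Fin n → ZMod 2) := fun v => (hpm v).choose with hmdef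
  have hm1 : ∀ v, M.Adj v (m v) := fun v => (hpm v).choose_spec.1
  have hm2 : ∀ v w, M.Adj v w → w = m v := fun v w h => (hpm v).choose_spec.2 w h
  have hminv : ∀ v, m (m v) = v := fun v => (hm2 (m v) v (hm1 v).symm).symm
  have hmadj : ∀ v, ∃ i, m v = v + sgl i := fun v => hyp_adj.mp (M.adj_sub (hm1 v))
  set C : Set (Fin n → ZMod 2) := {v | ∃ e ∈ S, v ∈ e} with hC
  set W := Cᶜ with hWdef
  have hWiff : ∀ v, v ∈ W ↔ v ∉ C := fun v => Iff.rfl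
  have hCm : ∀ v, v ∈ C → m v ∈ C := by
    rintro v ⟨e, heS, hve⟩
    revert hve
    refine Sym2.ind (fun a b heS hve => ?_) e heS
    have heM := hS heS
    rw [SimpleGraph.Subgraph.mem_edgeSet] at heM
    rcases Sym2.mem_iff.mp hve with rfl | rfl
    · exact ⟨s(v, b), heS, Sym2.mem_iff.mpr (Or.inr (hm2 v b heM).symm)⟩
    · exact ⟨s(a, v), heS, Sym2.mem_iff.mpr (Or.inl (hm2 v a heM.symm).symm)⟩
  have hWm : ∀ v, v ∈ W → m v ∈ W := by
    intro v hv hmv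
    apply hv
    have := hCm (m v) hmv
    rwa [hminv] at this
  have hWc : ∀ v, v ∉ W → m v ∉ W := by
    intro v hv hmv
    rw [hWiff, not_not] at hv
    exact hmv (hCm v hv)
  have huniq : ∀ σ : (Fin n → ZMod 2) → (Fin n → ZMod 2),
      (∀ v ∈ W, σ v ∈ W) → (∀ v ∉ W, σ v = m v) →
      (∀ v ∈ W, σ (σ v) = v) → (∀ v ∈ W, ∃ i, σ v = v + sgl i) →
      ∀ v ∈ W, σ v = m v := by
    intro σ h1 h2 h3 h4
    have hginv : ∀ v, σ (σ v) = v := by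
      intro v
      by_cases hv : v ∈ W
      · exact h3 v hv
      · rw [h2 v hv, h2 (m v) (hWc v hv), hminv]
    have hgadj : ∀ v, (hypercube n).Adj v (σ v) := by
      intro v
      by_cases hv : v ∈ W
      · exact hyp_adj.mpr (h4 v hv)
      · rw [h2 v hv]; exact hyp_adj.mpr (hmadj v)
    set M' : (hypercube n).Subgraph :=
      { verts := Set.univ
        Adj := fun x y => y = σ x
        adj_sub := fun {x y} h => h ▸ hgadj x
        edge_vert := fun _ => Set.mem_univ _
        symm := ⟨fun x y (h : y = σ x) => show x = σ y by rw [h, hginv]⟩ } with hM'def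
    have hM'pm : M'.IsPerfectMatching := by
      rw [SimpleGraph.Subgraph.isPerfectMatching_iff]
      intro v
      exact ⟨σ v, rfl, fun y hy => hy⟩
    have hSM' : S ⊆ M'.edgeSet := by
      intro e heS
      revert heS
      refine Sym2.ind (fun a b heS => ?_) e
      have heM := hS heS
      rw [SimpleGraph.Subgraph.mem_edgeSet] at heM
      rw [SimpleGraph.Subgraph.mem_edgeSet]
      have haW : a ∉ W := by
        rw [hWiff, not_not]
        exact ⟨s(a, b), heS, Sym2.mem_iff.mpr (Or.inl rfl)⟩
      show b = σ a
      rw [h2 a haW]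
      exact hm2 a b heM
    have hMM := hforce M' hM'pm hSM'
    intro v hv
    have hAdj : M.Adj v (σ v) := by
      rw [← hMM]
    exact hm2 v (σ v) hAdj
  obtain ⟨α, hα, hsum⟩ := exists_alpha n hn
  haveI : Fintype ↥W := Fintype.ofFinite _
  have hdet := det_submatrix_ne_zero α hα W m hWm hmadj hminv huniq
  have hAA := Amat_mul_self α hsum
  have hrank := two_mul_card_le_of_sq_zero (Amat α) hAA W hdet
  have hcardV : Fintype.card (Fin n → ZMod 2) = 2 ^ n := by
    rw [Fintype.card_fun, Fintype.card_fin, ZMod.card]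
  have hWcard : Fintype.card ↥W = W.ncard := by
    rw [Set.ncard_eq_toFinset_card', Set.toFinset_card]
  have hcompl : C.ncard + W.ncard = 2 ^ n := by
    rw [hWdef, Set.ncard_add_ncard_compl, Nat.card_eq_fintype_card, hcardV]
  haveI : Fintype ↥S := Fintype.ofFinite _
  have hScard : S.ncard = S.toFinset.card := Set.ncard_eq_toFinset_card' S
  have hCbound : C.ncard ≤ 2 * S.ncard := by
    set Cf : Finset (Fin n → ZMod 2) :=
      S.toFinset.biUnion (fun e => Finset.univ.filter (· ∈ e)) with hCf
    have hsub : C ⊆ ↑Cf := by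
      rintro v ⟨e, heS, hve⟩
      rw [Finset.coe_biUnion]
      exact Set.mem_biUnion (by rwa [Finset.mem_coe, Set.mem_toFinset]) (by simp [hve])
    have hCle : C.ncard ≤ Cf.card := by
      have := Set.ncard_le_ncard hsub (Cf.finite_toSet)
      rwa [Set.ncard_coe_finset] at this
    have hfl : ∀ e : Sym2 (Fin n → ZMod 2), (Finset.univ.filter (· ∈ e)).card ≤ 2 := by
      refine Sym2.ind fun a b => ?_
      have : Finset.univ.filter (· ∈ s(a, b)) = {a, b} := by
        ext x
        simp [Sym2.mem_iff]
      rw [this]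
      exact (Finset.card_insert_le _ _).trans (by rw [Finset.card_singleton])
    have hbi : Cf.card ≤ ∑ e ∈ S.toFinset, (Finset.univ.filter (· ∈ e)).card :=
      Finset.card_biUnion_le
    have hsum2 : ∑ e ∈ S.toFinset, (Finset.univ.filter (· ∈ e)).card ≤ S.toFinset.card * 2 := by
      refine (Finset.sum_le_card_nsmul _ _ 2 fun e _ => hfl e).trans ?_
      rw [smul_eq_mul]
    omega
  have h2n : 2 ^ n = 4 * 2 ^ (n - 2) := by
    have hsplit : n = (n - 2) + 2 := by omega
    conv_lhs => rw [hsplit]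
    rw [pow_add]
    ring
  have hcardV' : Fintype.card (DiwanAux.Vt n) = 2 ^ n := hcardV
  omega
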